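/- Let 0<q<1 and let l be a positive integer. Consider the ℤ-grading on O(SU_q(2)) determined by deg α = 1, deg β = -l, with degree-n component A_n. Then for every integer m, 1 ∈ A_{ml}·A_{-ml}. (Thus the coaction α ↦ α⊗u, β ↦ β⊗u^{-l} is almost free: the image of the lifted canonical map contains O(SU_q(2))⊗ℂ[u^l,u^{-l}], so its cokernel is a finitely generated left O(SU_q(2))-module.) -/

import Mathlib

/-- The defining relations of `O(SU_q(2))`: `αβ = qβα`, `αβ* = qβ*α`, `ββ* = β*β`,
`αα* = α*α + (q⁻² - 1)ββ*`, `αα* + ββ* = 1`. -/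
structure SUq2Rels {A : Type*} [Ring A] [Algebra ℂ A] [StarRing A]
    (q : ℝ) (α β : A) : Prop where
  rel1 : α * β = (q : ℂ) • (β * α)
  rel2 : α * star β = (q : ℂ) • (star β * α)
  rel3 : β * star β = star β * β
  rel4 : α * star α = star α * α + ((q : ℂ)⁻¹ ^ 2 - 1) • (β * star β)
  rel5 : α * star α + β * star β = 1

/-- `A` together with `α β : A` is the universal unital complex `*`-algebra on
generators `α, β` subject to the `O(SU_q(2))` relations. -/
def IsUniversalSUq2 (q : ℝ) {A : Type*} [Ring A] [Algebra ℂ A] [StarRing A]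
    [StarModule ℂ A] (α β : A) : Prop :=
  SUq2Rels q α β ∧
  ∀ (B : Type) [Ring B] [Algebra ℂ B] [StarRing B] [StarModule ℂ B],
    ∀ α' β' : B, SUq2Rels q α' β' → ∃! f : A →⋆ₐ[ℂ] B, f α = α' ∧ f β = β'

/-- For the ℤ-grading on `O(SU_q(2))` determined by `deg α = 1`,
`deg β = -l`, one has `1 ∈ A_{ml} · A_{-ml}` for every integer `m` (almost freeness of
the coaction `α ↦ α⊗u`, `β ↦ β⊗u^{-l}`). -/
theorem almost_free_coaction
    (q : ℝ) (hq0 : 0 < q) (hq1 : q < 1) (l : ℕ) (hl : 0 < l)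
    {A : Type*} [Ring A] [Algebra ℂ A] [StarRing A] [StarModule ℂ A]
    (α β : A) (huniv : IsUniversalSUq2 q α β)
    (𝒜 : ℤ → Submodule ℂ A) [GradedAlgebra 𝒜]
    (hα : α ∈ 𝒜 1) (hαs : star α ∈ 𝒜 (-1))
    (hβ : β ∈ 𝒜 (-(l : ℤ))) (hβs : star β ∈ 𝒜 (l : ℤ)) :
    ∀ m : ℤ, (1 : A) ∈ 𝒜 (m * l) * 𝒜 (-(m * l)) := by
  obtain ⟨hrels, -⟩ := huniv
  have hq : (q : ℂ) ≠ 0 := by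
    exact_mod_cast Complex.ofReal_ne_zero.mpr (ne_of_gt hq0)
  -- basic identities
  have one_eq : (1 : A) = α * star α + star β * β := by
    rw [← hrels.rel5, hrels.rel3]
  have one_eq' : (1 : A) = star α * α + ((q : ℂ)⁻¹ ^ 2) • (β * star β) := by
    rw [← hrels.rel5, hrels.rel4, sub_smul, one_smul]
    abel
  -- star of rel2 : β * star α = q • (star α * β)
  have rel2' : β * star α = (q : ℂ) • (star α * β) := by
    have h := congrArg star hrels.rel2
    simpa [star_mul, star_smul, Complex.conj_ofReal] using h
  -- commutation of powers
  have c1 : ∀ k : ℕ, α ^ k * star β = ((q : ℂ) ^ k) • (star β * α ^ k) := by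
    intro k
    induction k with
    | zero => simp
    | succ k ih =>
      calc α ^ (k + 1) * star β = α ^ k * (α * star β) := by
            rw [pow_succ, mul_assoc]
        _ = α ^ k * ((q : ℂ) • (star β * α)) := by rw [hrels.rel2]
        _ = (q : ℂ) • (α ^ k * star β * α) := by rw [mul_smul_comm, mul_assoc]
        _ = (q : ℂ) • ((((q : ℂ) ^ k) • (star β * α ^ k)) * α) := by rw [ih]
        _ = ((q : ℂ) ^ (k + 1)) • (star β * α ^ (k + 1)) := by
            rw [smul_mul_assoc, smul_smul, mul_assoc, ← pow_succ, ← pow_succ']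
  have c2 : ∀ k : ℕ, β * star α ^ k = ((q : ℂ) ^ k) • (star α ^ k * β) := by
    intro k
    induction k with
    | zero => simp
    | succ k ih =>
      calc β * star α ^ (k + 1) = β * star α ^ k * star α := by
            rw [pow_succ, mul_assoc]
        _ = (((q : ℂ) ^ k) • (star α ^ k * β)) * star α := by rw [ih]
        _ = ((q : ℂ) ^ k) • (star α ^ k * (β * star α)) := by
            rw [smul_mul_assoc, mul_assoc]
        _ = ((q : ℂ) ^ k) • (star α ^ k * ((q : ℂ) • (star α * β))) := by rw [rel2']
        _ = ((q : ℂ) ^ (k + 1)) • (star α ^ (k + 1) * β) := by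
            rw [mul_smul_comm, smul_smul, ← mul_assoc, ← pow_succ, ← pow_succ]
  have c3 : ∀ k : ℕ, star α ^ k * β = (((q : ℂ) ^ k))⁻¹ • (β * star α ^ k) := by
    intro k
    rw [c2 k, inv_smul_smul₀ (pow_ne_zero k hq)]
  have c4 : ∀ k : ℕ, star β * α ^ k = (((q : ℂ) ^ k))⁻¹ • (α ^ k * star β) := by
    intro k
    rw [c1 k, inv_smul_smul₀ (pow_ne_zero k hq)]
  -- power memberships
  have hαpow : ∀ k : ℕ, α ^ k ∈ 𝒜 (k : ℤ) := by
    intro k; have := SetLike.pow_mem_graded k hα; simpa using this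
  have hαspow : ∀ k : ℕ, star α ^ k ∈ 𝒜 (-(k : ℤ)) := by
    intro k; have := SetLike.pow_mem_graded k hαs; simpa using this
  -- telescoping identities
  have key : ∀ k : ℕ, α ^ k * star α ^ k =
      α ^ (k + 1) * star α ^ (k + 1)
        + ((q : ℂ) ^ k * (q : ℂ) ^ k) • (star β * (α ^ k * star α ^ k * β)) := by
    intro k
    calc α ^ k * star α ^ k
        = α ^ k * ((α * star α + star β * β) * star α ^ k) := by
          conv_lhs => rw [← one_mul (star α ^ k), one_eq]
      _ = α ^ k * α * (star α * star α ^ k) + α ^ k * star β * (β * star α ^ k) := by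
          noncomm_ring
      _ = α ^ (k + 1) * star α ^ (k + 1) + α ^ k * star β * (β * star α ^ k) := by
          rw [← pow_succ, ← pow_succ']
      _ = α ^ (k + 1) * star α ^ (k + 1)
            + (((q : ℂ) ^ k) • (star β * α ^ k)) * (((q : ℂ) ^ k) • (star α ^ k * β)) := by
          rw [c1 k, c2 k]
      _ = α ^ (k + 1) * star α ^ (k + 1)
            + ((q : ℂ) ^ k * (q : ℂ) ^ k) • (star β * (α ^ k * star α ^ k * β)) := by
          rw [smul_mul_assoc, mul_smul_comm, smul_smul]
          congr 2
          simp [mul_assoc]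
  have key' : ∀ k : ℕ, star α ^ k * α ^ k =
      star α ^ (k + 1) * α ^ (k + 1)
        + ((q : ℂ)⁻¹ ^ 2 * ((((q : ℂ) ^ k)⁻¹) * (((q : ℂ) ^ k)⁻¹))) •
            (β * (star α ^ k * α ^ k * star β)) := by
    intro k
    calc star α ^ k * α ^ k
        = star α ^ k * ((star α * α + ((q : ℂ)⁻¹ ^ 2) • (β * star β)) * α ^ k) := by
          conv_lhs => rw [← one_mul (α ^ k), one_eq']
      _ = star α ^ k * star α * (α * α ^ k)
            + ((q : ℂ)⁻¹ ^ 2) • ((star α ^ k * β) * (star β * α ^ k)) := by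
          rw [add_mul, mul_add, smul_mul_assoc, mul_smul_comm]
          congr 1
          · noncomm_ring
          · congr 1
            noncomm_ring
      _ = star α ^ (k + 1) * α ^ (k + 1)
            + ((q : ℂ)⁻¹ ^ 2) • ((((q : ℂ) ^ k)⁻¹ • (β * star α ^ k)) *
                (((q : ℂ) ^ k)⁻¹ • (α ^ k * star β))) := by
          rw [← pow_succ, ← pow_succ', c3, c4]
      _ = star α ^ (k + 1) * α ^ (k + 1)
            + ((q : ℂ)⁻¹ ^ 2 * ((((q : ℂ) ^ k)⁻¹) * (((q : ℂ) ^ k)⁻¹))) •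
            (β * (star α ^ k * α ^ k * star β)) := by
          rw [smul_mul_assoc, mul_smul_comm, smul_smul, smul_smul, mul_assoc]
          congr 1
          simp [mul_assoc]
  -- 1 ∈ 𝒜 l * 𝒜 (-l)
  have pos : (1 : A) ∈ 𝒜 (l : ℤ) * 𝒜 (-(l : ℤ)) := by
    have hP : ∀ j : ℕ, j ≤ l →
        α ^ (l - j) * star α ^ (l - j) ∈ 𝒜 (l : ℤ) * 𝒜 (-(l : ℤ)) := by
      intro j
      induction j with
      | zero =>
        intro _
        simpa using Submodule.mul_mem_mul (hαpow l) (hαspow l)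
      | succ j ih =>
        intro hj
        set k := l - (j + 1) with hkdef
        have hk1 : k + 1 = l - j := by omega
        rw [key k]
        refine add_mem ?_ (Submodule.smul_mem _ _ ?_)
        · rw [hk1]; exact ih (by omega)
        · have h0 : α ^ k * star α ^ k ∈ 𝒜 (0 : ℤ) := by
            have := SetLike.mul_mem_graded (hαpow k) (hαspow k)
            simpa using this
          have hmid : α ^ k * star α ^ k * β ∈ 𝒜 (-(l : ℤ)) := by
            have := SetLike.mul_mem_graded h0 hβ
            simpa using this
          exact Submodule.mul_mem_mul hβs hmid
    have := hP l le_rfl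
    simpa using this
  -- 1 ∈ 𝒜 (-l) * 𝒜 l
  have neg : (1 : A) ∈ 𝒜 (-(l : ℤ)) * 𝒜 (l : ℤ) := by
    have hP : ∀ j : ℕ, j ≤ l →
        star α ^ (l - j) * α ^ (l - j) ∈ 𝒜 (-(l : ℤ)) * 𝒜 (l : ℤ) := by
      intro j
      induction j with
      | zero =>
        intro _
        simpa using Submodule.mul_mem_mul (hαspow l) (hαpow l)
      | succ j ih =>
        intro hj
        set k := l - (j + 1) with hkdef
        have hk1 : k + 1 = l - j := by omega
        rw [key' k]
        refine add_mem ?_ (Submodule.smul_mem _ _ ?_)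
        · rw [hk1]; exact ih (by omega)
        · have h0 : star α ^ k * α ^ k ∈ 𝒜 (0 : ℤ) := by
            have := SetLike.mul_mem_graded (hαspow k) (hαpow k)
            simpa using this
          have hmid : star α ^ k * α ^ k * star β ∈ 𝒜 (l : ℤ) := by
            have := SetLike.mul_mem_graded h0 hβs
            simpa using this
          exact Submodule.mul_mem_mul hβ hmid
    have := hP l le_rfl
    simpa using this
  -- step lemma
  have step : ∀ a b : ℤ, (1 : A) ∈ 𝒜 a * 𝒜 (-a) → (1 : A) ∈ 𝒜 b * 𝒜 (-b) →
      (1 : A) ∈ 𝒜 (a + b) * 𝒜 (-(a + b)) := by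
    intro a b h1 h2
    refine Submodule.mul_induction_on h1 ?_ (fun u v hu hv => add_mem hu hv)
    intro x hx y hy
    have H : x * (1 : A) * y ∈ 𝒜 (a + b) * 𝒜 (-(a + b)) := by
      refine Submodule.mul_induction_on h2 ?_ ?_
      · intro p hp z hz
        have hxp : x * p ∈ 𝒜 (a + b) := SetLike.mul_mem_graded hx hp
        have hzy : z * y ∈ 𝒜 (-(a + b)) := by
          have := SetLike.mul_mem_graded hz hy
          have e : -b + -a = -(a + b) := by ring
          rwa [e] at this
        have e : x * (p * z) * y = (x * p) * (z * y) := by noncomm_ring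
        rw [e]
        exact Submodule.mul_mem_mul hxp hzy
      · intro u v hu hv
        have e : x * (u + v) * y = x * u * y + x * v * y := by noncomm_ring
        rw [e]
        exact add_mem hu hv
    simpa using H
  -- main induction
  intro m
  induction m using Int.induction_on with
  | zero =>
    have h0 : (1 : A) ∈ 𝒜 (0 : ℤ) * 𝒜 (0 : ℤ) := by
      have := Submodule.mul_mem_mul (SetLike.one_mem_graded 𝒜) (SetLike.one_mem_graded 𝒜)
      simpa using this
    simpa using h0
  | succ i ih =>
    have h := step (l : ℤ) ((i : ℤ) * l) pos ih
    have e : ((i : ℤ) + 1) * l = (l : ℤ) + (i : ℤ) * l := by ring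
    rwa [e]
  | pred i ih =>
    have neg' : (1 : A) ∈ 𝒜 (-(l : ℤ)) * 𝒜 (-(-(l : ℤ))) := by
      rwa [neg_neg]
    have h := step (-(l : ℤ)) ((-(i : ℤ)) * l) neg' ih
    have e : (-(i : ℤ) - 1) * l = -(l : ℤ) + (-(i : ℤ)) * l := by ring
    rwa [e]
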